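/- The triangulated torus graph T(k,m) with vertex set (ZMod k) × (ZMod m), where (i,j) is adjacent to (i±1,j), (i,j±1), (i+1,j-1) and (i-1,j+1), is properly 3-colorable if and only if 3 divides k and 3 divides m (for k, m ≥ 3). -/

import Mathlib

/-- Adjacency of the triangulated torus graph on `ZMod k × ZMod m`. -/
def TAdj (k m : ℕ) (p q : ZMod k × ZMod m) : Prop :=
  (q.1 - p.1, q.2 - p.2) ∈
    ({(1, 0), (-1, 0), (0, 1), (0, -1), (1, -1), (-1, 1)} : Set (ZMod k × ZMod m))

private lemma zmod3_key1 : ∀ a b d x : ZMod 3,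
    a ≠ b → a ≠ d → b ≠ d → b ≠ x → d ≠ x → x = a := by
  intro a b d x
  fin_cases a <;> fin_cases b <;> fin_cases d <;> fin_cases x <;> intros <;>
    first | rfl | contradiction | simp_all

private lemma zmod3_key2 : ∀ a b d : ZMod 3,
    a ≠ b → a ≠ d → b ≠ d → b - a = a - d := by
  intro a b d
  fin_cases a <;> fin_cases b <;> fin_cases d <;> intros <;> first | rfl | contradiction | simp_all

/-- The horizontal color-difference is globally constant. -/
private lemma econst (k m : ℕ) [NeZero k] [NeZero m] (C : ZMod k → ZMod m → ZMod 3)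
    (hE : ∀ i j, C i j ≠ C (i + 1) j)
    (hN : ∀ i j, C i j ≠ C i (j + 1))
    (hD : ∀ i j, C (i + 1) j ≠ C i (j + 1)) :
    ∀ i j, C (i + 1) j - C i j = C 1 0 - C 0 0 := by
  -- the diagonal identity
  have hdiag : ∀ i j, C (i + 1) (j + 1) = C i j := by
    intro i j
    exact zmod3_key1 (C i j) (C (i + 1) j) (C i (j + 1)) (C (i + 1) (j + 1))
      (hE i j) (hN i j) (hD i j) (hN (i + 1) j) (hE i (j + 1))
  -- e = -f
  have hef : ∀ i j, C (i + 1) j - C i j = -(C i (j + 1) - C i j) := by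
    intro i j
    have := zmod3_key2 (C i j) (C (i + 1) j) (C i (j + 1)) (hE i j) (hN i j) (hD i j)
    rw [this]; ring
  -- e step in j
  have hestepj : ∀ i j, C (i + 1) (j + 1) - C i (j + 1) = C (i + 1) j - C i j := by
    intro i j
    rw [hdiag i j, hef i j]; ring
  -- e step in i
  have hestepi : ∀ i j, C (i + 1 + 1) j - C (i + 1) j = C (i + 1) j - C i j := by
    intro i j
    have h1 := hef (i + 1) j
    have h2 : C (i + 1) (j + 1) - C (i + 1) j = -(C (i + 1) j - C i j) := by
      rw [hdiag i j]; ring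
    rw [h1, h2]; ring
  -- constancy along rows via nat-cast induction
  have hrow : ∀ (n : ℕ) (j : ZMod m), C ((n : ZMod k) + 1) j - C (n : ZMod k) j
      = C 1 j - C 0 j := by
    intro n j
    induction n with
    | zero => push_cast; ring_nf
    | succ p ih => push_cast at ih ⊢; rw [hestepi _ j, ih]
  have hcol : ∀ (n : ℕ), C 1 ((n : ZMod m)) - C 0 ((n : ZMod m)) = C 1 0 - C 0 0 := by
    intro n
    induction n with
    | zero => push_cast; ring_nf
    | succ p ih =>
      push_cast at ih ⊢
      have := hestepj 0 (p : ZMod m)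
      rw [zero_add] at this
      rw [this, ih]
  intro i j
  have hi : ((i.val : ℕ) : ZMod k) = i := ZMod.natCast_zmod_val i
  have hj : ((j.val : ℕ) : ZMod m) = j := ZMod.natCast_zmod_val j
  calc C (i + 1) j - C i j = C ((i.val : ZMod k) + 1) ((j.val : ZMod m))
        - C ((i.val : ZMod k)) ((j.val : ZMod m)) := by rw [hi, hj]
    _ = C 1 ((j.val : ZMod m)) - C 0 ((j.val : ZMod m)) := hrow i.val _
    _ = C 1 0 - C 0 0 := hcol j.val

/-- Telescoping around a cycle. -/
private lemma tele (k : ℕ) [NeZero k] (g : ZMod k → ZMod 3) (c : ZMod 3)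
    (hstep : ∀ i, g (i + 1) = g i + c) (hc : c ≠ 0) : 3 ∣ k := by
  have h : ∀ n : ℕ, g ((n : ZMod k)) = g 0 + (n : ZMod 3) * c := by
    intro n
    induction n with
    | zero => push_cast; ring_nf
    | succ p ih => push_cast [Nat.cast_succ]; rw [hstep _, ih]; ring
  have hk := h k
  rw [ZMod.natCast_self] at hk
  have hzero : ((k : ZMod 3)) * c = 0 := by linear_combination -hk
  haveI : Fact (Nat.Prime 3) := ⟨by norm_num⟩
  rcases mul_eq_zero.mp hzero with h0 | h0
  · exact (ZMod.natCast_eq_zero_iff k 3).mp h0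
  · exact absurd h0 hc

theorem stmt10 (k m : ℕ) (hk : 3 ≤ k) (hm : 3 ≤ m) :
    (∃ col : ZMod k × ZMod m → Fin 3,
        ∀ p q : ZMod k × ZMod m, TAdj k m p q → col p ≠ col q) ↔
      (3 ∣ k ∧ 3 ∣ m) := by
  haveI : NeZero k := ⟨by omega⟩
  haveI : NeZero m := ⟨by omega⟩
  constructor
  · rintro ⟨col, hcol⟩
    set C : ZMod k → ZMod m → ZMod 3 := fun i j => (((col (i, j)).val : ℕ) : ZMod 3) with hCdef
    have hCne : ∀ i i' j j', TAdj k m (i, j) (i', j') → C i j ≠ C i' j' := by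
      intro i i' j j' h hpq
      refine hcol _ _ h (Fin.ext ?_)
      have h2 := congrArg ZMod.val hpq
      simpa [hCdef, ZMod.val_natCast, Nat.mod_eq_of_lt (col (i, j)).isLt,
        Nat.mod_eq_of_lt (col (i', j')).isLt] using h2
    have adjE : ∀ (i : ZMod k) (j : ZMod m), TAdj k m (i, j) (i + 1, j) := by
      intro i j; simp [TAdj]
    have adjN : ∀ (i : ZMod k) (j : ZMod m), TAdj k m (i, j) (i, j + 1) := by
      intro i j; simp [TAdj]
    have adjD : ∀ (i : ZMod k) (j : ZMod m), TAdj k m (i + 1, j) (i, j + 1) := by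
      intro i j; simp [TAdj]
    have hE : ∀ i j, C i j ≠ C (i + 1) j := fun i j => hCne i (i + 1) j j (adjE i j)
    have hN : ∀ i j, C i j ≠ C i (j + 1) := fun i j => hCne i i j (j + 1) (adjN i j)
    have hD : ∀ i j, C (i + 1) j ≠ C i (j + 1) := fun i j =>
      hCne (i + 1) i j (j + 1) (adjD i j)
    have hconst := econst k m C hE hN hD
    set c : ZMod 3 := C 1 0 - C 0 0 with hc
    have hc0 : c ≠ 0 := by
      rw [hc]
      have := hE 0 0
      rw [zero_add] at this
      exact sub_ne_zero_of_ne (Ne.symm this)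
    constructor
    · refine tele k (fun i => C i 0) c ?_ hc0
      intro i
      have := hconst i 0
      linear_combination this
    · -- transpose
      have hconst' := econst m k (fun j i => C i j) (fun j i => hN i j)
        (fun j i => hE i j) (fun j i => (hD i j).symm)
      refine tele m (fun j => C 0 j) (C 0 1 - C 0 0) ?_ ?_
      · intro j
        have := hconst' j 0
        linear_combination this
      · have := hN 0 0
        rw [zero_add] at this
        exact sub_ne_zero_of_ne (Ne.symm this)
  · rintro ⟨hk3, hm3⟩
    set φ := ZMod.castHom hk3 (ZMod 3) with hφ
    set ψ := ZMod.castHom hm3 (ZMod 3) with hψ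
    refine ⟨fun p => ⟨(φ p.1 + 2 * ψ p.2).val, ZMod.val_lt _⟩, ?_⟩
    intro p q hadj h
    have h' : φ p.1 + 2 * ψ p.2 = φ q.1 + 2 * ψ q.2 := by
      have h2 := congrArg Fin.val h
      simp only at h2
      exact ZMod.val_injective _ h2
    have key : φ (q.1 - p.1) + 2 * ψ (q.2 - p.2) = 0 := by
      rw [map_sub, map_sub]; linear_combination -h'
    have hmem := hadj
    simp only [TAdj, Set.mem_insert_iff, Set.mem_singleton_iff, Prod.mk.injEq] at hmem
    rcases hmem with ⟨h1, h2⟩ | ⟨h1, h2⟩ | ⟨h1, h2⟩ | ⟨h1, h2⟩ | ⟨h1, h2⟩ | ⟨h1, h2⟩ <;>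
      rw [h1, h2] at key <;>
      simp only [map_one, map_neg, map_zero, mul_zero, mul_one, mul_neg, add_zero,
        zero_add] at key <;>
      revert key <;> decide
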